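/- Let s, φ ∈ C¹_FF([0,1]) with ‖s'‖₁ > 0 and ‖φ'‖₁ > 0. If there exist g₁, g₂ ∈ 𝒢 such that s∘g₁ = φ∘g₂, then d_T(s,φ) = 0. -/

import Mathlib

open Set MeasureTheory

/-- `g` is piecewise-C¹ on `[0,1]`: continuous, differentiable except at finitely many
points, with derivative continuous off that finite exceptional set. -/
def PiecewiseC1 (g : ℝ → ℝ) : Prop :=
  ContinuousOn g (Set.Icc 0 1) ∧
  ∃ S : Finset ℝ,
    (∀ x ∈ Set.Icc (0:ℝ) 1 \ S, DifferentiableAt ℝ g x) ∧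
    ContinuousOn (deriv g) (Set.Icc 0 1 \ S)

/-- `g` has finitely many flat regions: the zero set of `g'` in `[0,1]` has finitely many
connected components. -/
def FiniteFlats (g : ℝ → ℝ) : Prop :=
  {C : Set ℝ | ∃ x ∈ {y ∈ Set.Icc (0:ℝ) 1 | deriv g y = 0},
      C = connectedComponentIn {y ∈ Set.Icc (0:ℝ) 1 | deriv g y = 0} x}.Finite

/-- The class C¹_FF([0,1]). -/
def C1FF (g : ℝ → ℝ) : Prop := PiecewiseC1 g ∧ FiniteFlats g

/-- The set 𝒢 of admissible time warps: C¹_FF, non-decreasing on `[0,1]`,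
with `g 0 = 0` and `g 1 = 1`. -/
def InG (g : ℝ → ℝ) : Prop :=
  C1FF g ∧ MonotoneOn g (Set.Icc 0 1) ∧ g 0 = 0 ∧ g 1 = 1

/-- Generalized inverse of `F : [a,b] → ℝ` : `F†(y) = inf {x ∈ [a,b] | F x > y}`,
with `inf ∅ = b` (implemented by adjoining `{b}`). -/
noncomputable def genInv (a b : ℝ) (F : ℝ → ℝ) (y : ℝ) : ℝ :=
  sInf ({x ∈ Set.Icc a b | y < F x} ∪ {b})

/-- `‖f'‖₁ = ∫₀¹ |f'(x)| dx`. -/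
noncomputable def normD1 (f : ℝ → ℝ) : ℝ := ∫ x in (0:ℝ)..1, |deriv f x|

/-- CDF of the normalized density `|f'| / ‖f'‖₁`. -/
noncomputable def cdfOf (f : ℝ → ℝ) (t : ℝ) : ℝ :=
  (normD1 f)⁻¹ * ∫ x in (0:ℝ)..t, |deriv f x|

/-- The optimal transport map `g = F_φ† ∘ F_s` between `|s'|/‖s'‖₁` and `|φ'|/‖φ'‖₁`. -/
noncomputable def transportMap (s φ : ℝ → ℝ) (x : ℝ) : ℝ :=
  genInv 0 1 (cdfOf φ) (cdfOf s x)

/-- The transport divergence `d_T`. -/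
noncomputable def dT (s φ : ℝ → ℝ) : ℝ :=
  Real.sqrt (∫ x in (0:ℝ)..1,
    |s x - φ (transportMap s φ x)| ^ 2 * Real.sqrt (deriv (transportMap s φ) x))

open Filter Topology

/-- A function continuous on `[a,b]` with zero derivative on `(a,b)` is constant. -/
lemma aux_const_base {f : ℝ → ℝ} {a b : ℝ}
    (hcont : ContinuousOn f (Icc a b))
    (hd : ∀ x ∈ Ioo a b, HasDerivAt f 0 x) :
    ∀ x ∈ Icc a b, f x = f a := by
  intro x hx
  have hab : a ≤ b := le_trans hx.1 hx.2
  have hmono : MonotoneOn f (Icc a b) := by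
    apply monotoneOn_of_deriv_nonneg (convex_Icc a b) hcont
    · intro y hy
      rw [interior_Icc] at hy
      exact (hd y hy).differentiableAt.differentiableWithinAt
    · intro y hy
      rw [interior_Icc] at hy
      rw [(hd y hy).deriv]
  have hanti : MonotoneOn (fun t => -f t) (Icc a b) := by
    apply monotoneOn_of_deriv_nonneg (convex_Icc a b) hcont.neg
    · intro y hy
      rw [interior_Icc] at hy
      exact ((hd y hy).neg).differentiableAt.differentiableWithinAt
    · intro y hy
      rw [interior_Icc] at hy
      rw [((hd y hy).neg).deriv]
      simp
  have h1 := hmono (left_mem_Icc.2 hab) hx hx.1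
  have h2 := hanti (left_mem_Icc.2 hab) hx hx.1
  simp only [neg_le_neg_iff] at h2
  linarith

/-- Constancy with finitely many exceptional points. -/
lemma aux_const_of_finite {E : Set ℝ} (hE : E.Finite) :
    ∀ (f : ℝ → ℝ) (a b : ℝ), ContinuousOn f (Icc a b) →
      (∀ x ∈ Ioo a b \ E, HasDerivAt f 0 x) → ∀ x ∈ Icc a b, f x = f a := by
  refine Set.Finite.induction_on
    (motive := fun E _ => ∀ (f : ℝ → ℝ) (a b : ℝ), ContinuousOn f (Icc a b) →
      (∀ x ∈ Ioo a b \ E, HasDerivAt f 0 x) → ∀ x ∈ Icc a b, f x = f a) E hE ?_ ?_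
  · intro f a b hcont hd
    exact aux_const_base hcont (fun x hx => hd x ⟨hx, notMem_empty x⟩)
  · intro e T heT hT IH f a b hcont hd x hx
    by_cases he : e ∈ Ioo a b
    · have h1 : ∀ z ∈ Icc a e, f z = f a := by
        apply IH f a e (hcont.mono (Icc_subset_Icc le_rfl he.2.le))
        intro z hz
        refine hd z ⟨⟨hz.1.1, hz.1.2.trans he.2⟩, ?_⟩
        simp only [mem_insert_iff, not_or]
        exact ⟨ne_of_lt hz.1.2, hz.2⟩
      have h2 : ∀ z ∈ Icc e b, f z = f e := by
        apply IH f e b (hcont.mono (Icc_subset_Icc he.1.le le_rfl))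
        intro z hz
        refine hd z ⟨⟨he.1.trans hz.1.1, hz.1.2⟩, ?_⟩
        simp only [mem_insert_iff, not_or]
        exact ⟨(ne_of_lt hz.1.1).symm, hz.2⟩
      rcases le_total x e with hxe | hxe
      · exact h1 x ⟨hx.1, hxe⟩
      · rw [h2 x ⟨hxe, hx.2⟩, h1 e ⟨he.1.le, le_rfl⟩]
    · refine IH f a b hcont (fun z hz => hd z ⟨hz.1, ?_⟩) x hx
      simp only [mem_insert_iff, not_or]
      exact ⟨fun h => he (h ▸ hz.1), hz.2⟩

/-- Derivative of a function monotone on `[0,1]` is nonnegative at interior points. -/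
lemma aux_deriv_nonneg {g : ℝ → ℝ} {t d : ℝ} (hm : MonotoneOn g (Icc 0 1))
    (ht : t ∈ Ioo (0:ℝ) 1) (hd : HasDerivAt g d t) : 0 ≤ d := by
  have hslope : Tendsto (slope g t) (𝓝[Ioo t 1 \ {t}] t) (𝓝 d) :=
    hasDerivWithinAt_iff_tendsto_slope.mp (hd.hasDerivWithinAt (s := Ioo t 1))
  have hne : (𝓝[Ioo t 1 \ {t}] t).NeBot := by
    rw [diff_singleton_eq_self (fun h => (lt_irrefl t h.1))]
    rw [nhdsWithin_Ioo_eq_nhdsGT ht.2]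
    exact nhdsGT_neBot t
  refine ge_of_tendsto hslope ?_
  filter_upwards [self_mem_nhdsWithin] with u hu
  have htu : t < u := hu.1.1
  have hgu : g t ≤ g u := hm ⟨ht.1.le, ht.2.le⟩ ⟨ht.1.le.trans htu.le, hu.1.2.le⟩ htu.le
  rw [slope_def_field]
  exact div_nonneg (by linarith) (by linarith)

/-- If `f` is constant on `[u,v]`, the integral of `|deriv f|` over `[u,v]` vanishes. -/
lemma aux_flat_integral {f : ℝ → ℝ} {u v : ℝ} (huv : u ≤ v)
    (hconst : ∀ z ∈ Icc u v, f z = f u) :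
    ∫ x in u..v, |deriv f x| = 0 := by
  have hd : ∀ z ∈ Ioo u v, deriv f z = 0 := by
    intro z hz
    have hev : ∀ᶠ w in 𝓝 z, f w = f u :=
      eventually_of_mem (Ioo_mem_nhds hz.1 hz.2) (fun w hw => hconst w (Ioo_subset_Icc_self hw))
    exact ((hasDerivAt_const z (f u)).congr_of_eventuallyEq hev).deriv
  apply intervalIntegral.integral_zero_ae
  have hv : ∀ᵐ (x : ℝ), x ≠ v := by
    rw [ae_iff]
    simp only [not_not]
    have : {x : ℝ | x = v} = {v} := by ext x; simp
    rw [this]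
    exact measure_singleton v
  filter_upwards [hv] with x hx hxm
  rw [uIoc_of_le huv] at hxm
  have : x ∈ Ioo u v := ⟨hxm.1, lt_of_le_of_ne hxm.2 hx⟩
  rw [hd x this, abs_zero]

/-- FTC: derivative of the primitive of `|deriv f|` at a good point. -/
lemma aux_prim_deriv {f : ℝ → ℝ} {S : Finset ℝ}
    (hcont : ContinuousOn (deriv f) (Icc 0 1 \ S))
    (hint : IntervalIntegrable (fun x => |deriv f x|) volume 0 1)
    {y : ℝ} (hy : y ∈ Ioo (0:ℝ) 1) (hyS : y ∉ (S : Set ℝ)) :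
    HasDerivAt (fun t => ∫ x in (0:ℝ)..t, |deriv f x|) (|deriv f y|) y := by
  apply intervalIntegral.integral_hasDerivAt_right (hint.mono_set ?_) ?_ ?_
  · rw [uIcc_of_le hy.1.le, uIcc_of_le (zero_le_one)]
    exact Icc_subset_Icc le_rfl hy.2.le
  · exact ((measurable_deriv f).abs.stronglyMeasurable).stronglyMeasurableAtFilter
  · have hopen : IsOpen (Ioo (0:ℝ) 1 \ S) := isOpen_Ioo.sdiff (S.finite_toSet.isClosed)
    have hca : ContinuousAt (deriv f) y :=
      (hcont.mono (diff_subset_diff_left Ioo_subset_Icc_self)).continuousAt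
        (hopen.mem_nhds ⟨hy, hyS⟩)
    exact hca.abs

lemma aux_maps {g : ℝ → ℝ} (hm : MonotoneOn g (Icc 0 1)) (h0 : g 0 = 0) (h1 : g 1 = 1) :
    ∀ u ∈ Icc (0:ℝ) 1, g u ∈ Icc (0:ℝ) 1 := by
  intro u hu
  constructor
  · rw [← h0]; exact hm (left_mem_Icc.2 zero_le_one) hu hu.1
  · rw [← h1]; exact hm hu (right_mem_Icc.2 zero_le_one) hu.2

lemma aux_sub_int {f : ℝ → ℝ} (hint : IntervalIntegrable f volume 0 1)
    {c d : ℝ} (hc : c ∈ Icc (0:ℝ) 1) (hd : d ∈ Icc (0:ℝ) 1) :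
    IntervalIntegrable f volume c d := by
  apply hint.mono_set
  rw [uIcc_of_le zero_le_one]
  exact uIcc_subset_Icc hc hd

lemma aux_prim_add {f : ℝ → ℝ} (hint : IntervalIntegrable f volume 0 1)
    {c d : ℝ} (hc : c ∈ Icc (0:ℝ) 1) (hd : d ∈ Icc (0:ℝ) 1) :
    (∫ x in (0:ℝ)..c, f x) + (∫ x in c..d, f x) = ∫ x in (0:ℝ)..d, f x :=
  intervalIntegral.integral_add_adjacent_intervals
    (aux_sub_int hint (left_mem_Icc.2 zero_le_one) hc) (aux_sub_int hint hc hd)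

lemma aux_flat_pair {f f' g g' : ℝ → ℝ}
    (hg'c : ContinuousOn g' (Icc 0 1)) (hg'm : MonotoneOn g' (Icc 0 1))
    (hg'0 : g' 0 = 0) (hg'1 : g' 1 = 1)
    (hint' : IntervalIntegrable (fun x => |deriv f' x|) volume 0 1)
    (hmatch : ∀ u ∈ Icc (0:ℝ) 1, f (g u) = f' (g' u))
    {t p q : ℝ} (ht : t ∈ Ioo p q) (hsub : Ioo p q ⊆ Icc 0 1)
    (hgconst : ∀ u ∈ Ioo p q, g u = g t) :
    HasDerivAt (fun u => ∫ x in (0:ℝ)..(g' u), |deriv f' x|) 0 t := by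
  have hkey : ∀ u ∈ Ioo p q,
      (∫ x in (0:ℝ)..(g' u), |deriv f' x|) = ∫ x in (0:ℝ)..(g' t), |deriv f' x| := by
    intro u hu
    rcases le_total t u with htu | htu
    · have hIcc_tu : Icc t u ⊆ Ioo p q := fun w hw =>
        ⟨lt_of_lt_of_le ht.1 hw.1, lt_of_le_of_lt hw.2 hu.2⟩
      have hg'tu : g' t ≤ g' u := hg'm (hsub ht) (hsub hu) htu
      have hiv : Icc (g' t) (g' u) ⊆ g' '' Icc t u :=
        intermediate_value_Icc htu (hg'c.mono (hIcc_tu.trans hsub))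
      have hconst : ∀ z ∈ Icc (g' t) (g' u), f' z = f' (g' t) := by
        intro z hz
        obtain ⟨w, hw, rfl⟩ := hiv hz
        rw [← hmatch w (hsub (hIcc_tu hw)), ← hmatch t (hsub ht),
          hgconst w (hIcc_tu hw), hgconst t ht]
      have hzero : ∫ x in (g' t)..(g' u), |deriv f' x| = 0 := aux_flat_integral hg'tu hconst
      have hadd := aux_prim_add hint' (aux_maps hg'm hg'0 hg'1 t (hsub ht))
        (aux_maps hg'm hg'0 hg'1 u (hsub hu))
      linarith
    · have hIcc_ut : Icc u t ⊆ Ioo p q := fun w hw =>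
        ⟨lt_of_lt_of_le hu.1 hw.1, lt_of_le_of_lt hw.2 ht.2⟩
      have hg'ut : g' u ≤ g' t := hg'm (hsub hu) (hsub ht) htu
      have hiv : Icc (g' u) (g' t) ⊆ g' '' Icc u t :=
        intermediate_value_Icc htu (hg'c.mono (hIcc_ut.trans hsub))
      have hconst : ∀ z ∈ Icc (g' u) (g' t), f' z = f' (g' u) := by
        intro z hz
        obtain ⟨w, hw, rfl⟩ := hiv hz
        rw [← hmatch w (hsub (hIcc_ut hw)), ← hmatch u (hsub hu),
          hgconst w (hIcc_ut hw), hgconst u hu]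
      have hzero : ∫ x in (g' u)..(g' t), |deriv f' x| = 0 := aux_flat_integral hg'ut hconst
      have hadd := aux_prim_add hint' (aux_maps hg'm hg'0 hg'1 u (hsub hu))
        (aux_maps hg'm hg'0 hg'1 t (hsub ht))
      linarith
  exact (hasDerivAt_const t _).congr_of_eventuallyEq
    (eventually_of_mem (Ioo_mem_nhds ht.1 ht.2) hkey)
lemma key_match {s φ g₁ g₂ : ℝ → ℝ}
    (hs : C1FF s) (hφ : C1FF φ)
    (hints : IntervalIntegrable (fun x => |deriv s x|) volume 0 1)
    (hintφ : IntervalIntegrable (fun x => |deriv φ x|) volume 0 1)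
    (hg₁ : InG g₁) (hg₂ : InG g₂)
    (hmatch : ∀ t ∈ Icc (0:ℝ) 1, s (g₁ t) = φ (g₂ t)) :
    ∀ t ∈ Icc (0:ℝ) 1,
      (∫ x in (0:ℝ)..(g₁ t), |deriv s x|) = ∫ x in (0:ℝ)..(g₂ t), |deriv φ x| := by
  obtain ⟨⟨hscont, Ss, hsdiff, hsdc⟩, -⟩ := hs
  obtain ⟨⟨hφcont, Sφ, hφdiff, hφdc⟩, -⟩ := hφ
  obtain ⟨⟨⟨hg₁cont, S₁, hg₁diff, -⟩, -⟩, hg₁m, hg₁0, hg₁1⟩ := hg₁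
  obtain ⟨⟨⟨hg₂cont, S₂, hg₂diff, -⟩, -⟩, hg₂m, hg₂0, hg₂1⟩ := hg₂
  set Ps : ℝ → ℝ := fun u => ∫ x in (0:ℝ)..u, |deriv s x| with hPs
  set Pφ : ℝ → ℝ := fun u => ∫ x in (0:ℝ)..u, |deriv φ x| with hPφ
  set B : ℝ → ℝ := fun u => Ps (g₁ u) - Pφ (g₂ u) with hB
  set V₁ : Set ℝ := ↑Ss ∪ {0, 1} with hV₁
  set V₂ : Set ℝ := ↑Sφ ∪ {0, 1} with hV₂
  have hV₁fin : V₁.Finite := Ss.finite_toSet.union ((finite_singleton 1).insert 0)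
  have hV₂fin : V₂.Finite := Sφ.finite_toSet.union ((finite_singleton 1).insert 0)
  set P₁ : ℝ → Set ℝ := fun v => {w ∈ Icc (0:ℝ) 1 | g₁ w = v} with hP₁
  set P₂ : ℝ → Set ℝ := fun v => {w ∈ Icc (0:ℝ) 1 | g₂ w = v} with hP₂
  set E : Set ℝ := (↑S₁ ∪ ↑S₂) ∪
      ((⋃ v ∈ V₁, {sInf (P₁ v), sSup (P₁ v)}) ∪ (⋃ v ∈ V₂, {sInf (P₂ v), sSup (P₂ v)}))
      with hE
  have hEfin : E.Finite := by
    refine ((S₁.finite_toSet.union S₂.finite_toSet).union (Set.Finite.union ?_ ?_))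
    · exact hV₁fin.biUnion (fun v _ => (finite_singleton _).insert _)
    · exact hV₂fin.biUnion (fun v _ => (finite_singleton _).insert _)
  have hPscont : ContinuousOn Ps (Icc 0 1) := by
    have := intervalIntegral.continuousOn_primitive_interval'
      (μ := volume) (f := fun x => |deriv s x|) hints (left_mem_uIcc)
    rwa [uIcc_of_le zero_le_one] at this
  have hPφcont : ContinuousOn Pφ (Icc 0 1) := by
    have := intervalIntegral.continuousOn_primitive_interval'
      (μ := volume) (f := fun x => |deriv φ x|) hintφ (left_mem_uIcc)
    rwa [uIcc_of_le zero_le_one] at this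
  have hmaps₁ := aux_maps hg₁m hg₁0 hg₁1
  have hmaps₂ := aux_maps hg₂m hg₂0 hg₂1
  have hBcont : ContinuousOn B (Icc 0 1) :=
    (hPscont.comp hg₁cont hmaps₁).sub (hPφcont.comp hg₂cont hmaps₂)
  have hBderiv : ∀ t ∈ Ioo (0:ℝ) 1 \ E, HasDerivAt B 0 t := by
    intro t ht
    obtain ⟨htI, htE⟩ := ht
    have htIcc : t ∈ Icc (0:ℝ) 1 := Ioo_subset_Icc_self htI
    have flatNbhd : ∀ (g : ℝ → ℝ), MonotoneOn g (Icc 0 1) →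
        (∀ P : Set ℝ, P = {w ∈ Icc (0:ℝ) 1 | g w = g t} → t ≠ sInf P ∧ t ≠ sSup P) →
        ∃ p q : ℝ, t ∈ Ioo p q ∧ Ioo p q ⊆ Icc 0 1 ∧ ∀ u ∈ Ioo p q, g u = g t := by
      intro g hm hne
      obtain ⟨hne1, hne2⟩ := hne _ rfl
      set P := {w ∈ Icc (0:ℝ) 1 | g w = g t} with hPdef
      have htP : t ∈ P := ⟨htIcc, rfl⟩
      have hPne : P.Nonempty := ⟨t, htP⟩
      have hbdd : BddBelow P := ⟨0, fun w hw => hw.1.1⟩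
      have hbddA : BddAbove P := ⟨1, fun w hw => hw.1.2⟩
      have hinf : sInf P < t := lt_of_le_of_ne (csInf_le hbdd htP) (Ne.symm hne1)
      have hsup : t < sSup P := lt_of_le_of_ne (le_csSup hbddA htP) hne2
      have hIooP : ∀ z ∈ Ioo (sInf P) (sSup P), z ∈ P := by
        intro z hz
        obtain ⟨a, haP, haz⟩ := exists_lt_of_csInf_lt hPne hz.1
        obtain ⟨b, hbP, hzb⟩ := exists_lt_of_lt_csSup hPne hz.2
        have hzI : z ∈ Icc (0:ℝ) 1 := ⟨haP.1.1.trans haz.le, hzb.le.trans hbP.1.2⟩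
        have h1 : g a ≤ g z := hm haP.1 hzI haz.le
        have h2 : g z ≤ g b := hm hzI hbP.1 hzb.le
        exact ⟨hzI, le_antisymm (hbP.2 ▸ h2) (haP.2 ▸ h1)⟩
      exact ⟨sInf P, sSup P, ⟨hinf, hsup⟩, fun z hz => (hIooP z hz).1,
        fun u hu => (hIooP u hu).2⟩
    by_cases h1 : g₁ t ∈ V₁
    · have hside : ∀ P : Set ℝ, P = {w ∈ Icc (0:ℝ) 1 | g₁ w = g₁ t} →
          t ≠ sInf P ∧ t ≠ sSup P := by
        intro P hPeq
        constructor
        · intro hcontra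
          apply htE
          refine Or.inr (Or.inl (mem_biUnion h1 ?_))
          rw [hPeq] at hcontra
          exact mem_insert_iff.mpr (Or.inl hcontra)
        · intro hcontra
          apply htE
          refine Or.inr (Or.inl (mem_biUnion h1 ?_))
          rw [hPeq] at hcontra
          exact mem_insert_iff.mpr (Or.inr (mem_singleton_iff.mpr hcontra))
      obtain ⟨p, q, htpq, hsub, hconst⟩ := flatNbhd g₁ hg₁m hside
      have hA : HasDerivAt (fun u => Ps (g₁ u)) 0 t :=
        (hasDerivAt_const t (Ps (g₁ t))).congr_of_eventuallyEq
          (eventually_of_mem (Ioo_mem_nhds htpq.1 htpq.2)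
            (fun u hu => by show Ps (g₁ u) = Ps (g₁ t); rw [hconst u hu]))
      have hA2 : HasDerivAt (fun u => Pφ (g₂ u)) 0 t :=
        aux_flat_pair hg₂cont hg₂m hg₂0 hg₂1 hintφ hmatch htpq hsub hconst
      have h := hA.sub hA2
      rw [sub_zero] at h
      exact h
    · by_cases h2 : g₂ t ∈ V₂
      · have hside : ∀ P : Set ℝ, P = {w ∈ Icc (0:ℝ) 1 | g₂ w = g₂ t} →
            t ≠ sInf P ∧ t ≠ sSup P := by
          intro P hPeq
          constructor
          · intro hcontra
            apply htE
            refine Or.inr (Or.inr (mem_biUnion h2 ?_))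
            rw [hPeq] at hcontra
            exact mem_insert_iff.mpr (Or.inl hcontra)
          · intro hcontra
            apply htE
            refine Or.inr (Or.inr (mem_biUnion h2 ?_))
            rw [hPeq] at hcontra
            exact mem_insert_iff.mpr (Or.inr (mem_singleton_iff.mpr hcontra))
        obtain ⟨p, q, htpq, hsub, hconst⟩ := flatNbhd g₂ hg₂m hside
        have hA : HasDerivAt (fun u => Pφ (g₂ u)) 0 t :=
          (hasDerivAt_const t (Pφ (g₂ t))).congr_of_eventuallyEq
            (eventually_of_mem (Ioo_mem_nhds htpq.1 htpq.2)
              (fun u hu => by show Pφ (g₂ u) = Pφ (g₂ t); rw [hconst u hu]))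
        have hA2 : HasDerivAt (fun u => Ps (g₁ u)) 0 t :=
          aux_flat_pair hg₁cont hg₁m hg₁0 hg₁1 hints
            (fun u hu => (hmatch u hu).symm) htpq hsub hconst
        have h := hA2.sub hA
        rw [sub_zero] at h
        exact h
      · -- good case
        have htS₁ : t ∉ (↑S₁ : Set ℝ) := fun h => htE (Or.inl (Or.inl h))
        have htS₂ : t ∉ (↑S₂ : Set ℝ) := fun h => htE (Or.inl (Or.inr h))
        have hy₁I : g₁ t ∈ Icc (0:ℝ) 1 := hmaps₁ t htIcc
        have hy₂I : g₂ t ∈ Icc (0:ℝ) 1 := hmaps₂ t htIcc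
        simp only [hV₁, mem_union, mem_insert_iff, mem_singleton_iff, not_or] at h1
        simp only [hV₂, mem_union, mem_insert_iff, mem_singleton_iff, not_or] at h2
        have hy₁Ioo : g₁ t ∈ Ioo (0:ℝ) 1 :=
          ⟨lt_of_le_of_ne hy₁I.1 (Ne.symm h1.2.1), lt_of_le_of_ne hy₁I.2 h1.2.2⟩
        have hy₂Ioo : g₂ t ∈ Ioo (0:ℝ) 1 :=
          ⟨lt_of_le_of_ne hy₂I.1 (Ne.symm h2.2.1), lt_of_le_of_ne hy₂I.2 h2.2.2⟩
        have hg₁d : HasDerivAt g₁ (deriv g₁ t) t :=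
          (hg₁diff t ⟨htIcc, htS₁⟩).hasDerivAt
        have hg₂d : HasDerivAt g₂ (deriv g₂ t) t :=
          (hg₂diff t ⟨htIcc, htS₂⟩).hasDerivAt
        have hPsd : HasDerivAt Ps |deriv s (g₁ t)| (g₁ t) :=
          aux_prim_deriv hsdc hints hy₁Ioo h1.1
        have hPφd : HasDerivAt Pφ |deriv φ (g₂ t)| (g₂ t) :=
          aux_prim_deriv hφdc hintφ hy₂Ioo h2.1
        have hC₁ : HasDerivAt (fun u => Ps (g₁ u)) (|deriv s (g₁ t)| * deriv g₁ t) t :=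
          hPsd.comp t hg₁d
        have hC₂ : HasDerivAt (fun u => Pφ (g₂ u)) (|deriv φ (g₂ t)| * deriv g₂ t) t :=
          hPφd.comp t hg₂d
        have hsd : HasDerivAt s (deriv s (g₁ t)) (g₁ t) :=
          (hsdiff _ ⟨hy₁I, h1.1⟩).hasDerivAt
        have hφd : HasDerivAt φ (deriv φ (g₂ t)) (g₂ t) :=
          (hφdiff _ ⟨hy₂I, h2.1⟩).hasDerivAt
        have hcomp₁ : HasDerivAt (fun u => s (g₁ u)) (deriv s (g₁ t) * deriv g₁ t) t :=
          hsd.comp t hg₁d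
        have hcomp₂ : HasDerivAt (fun u => φ (g₂ u)) (deriv φ (g₂ t) * deriv g₂ t) t :=
          hφd.comp t hg₂d
        have hev : (fun u => φ (g₂ u)) =ᶠ[𝓝 t] (fun u => s (g₁ u)) :=
          eventually_of_mem (Ioo_mem_nhds htI.1 htI.2)
            (fun u hu => (hmatch u (Ioo_subset_Icc_self hu)).symm)
        have hcomp₁' : HasDerivAt (fun u => φ (g₂ u)) (deriv s (g₁ t) * deriv g₁ t) t :=
          hcomp₁.congr_of_eventuallyEq hev
        have huniq : deriv s (g₁ t) * deriv g₁ t = deriv φ (g₂ t) * deriv g₂ t :=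
          hcomp₁'.unique hcomp₂
        have hd₁ : 0 ≤ deriv g₁ t := aux_deriv_nonneg hg₁m htI hg₁d
        have hd₂ : 0 ≤ deriv g₂ t := aux_deriv_nonneg hg₂m htI hg₂d
        have habs : |deriv s (g₁ t)| * deriv g₁ t = |deriv φ (g₂ t)| * deriv g₂ t := by
          have h := congrArg abs huniq
          rwa [abs_mul, abs_mul, abs_of_nonneg hd₁, abs_of_nonneg hd₂] at h
        have h0 : |deriv s (g₁ t)| * deriv g₁ t - |deriv φ (g₂ t)| * deriv g₂ t = 0 := by
          rw [habs, sub_self]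
        exact h0 ▸ hC₁.sub hC₂
  have hB0 : B 0 = 0 := by
    simp only [hB, hPs, hPφ, hg₁0, hg₂0, intervalIntegral.integral_same, sub_self]
  intro t ht
  have := aux_const_of_finite hEfin B 0 1 hBcont hBderiv t ht
  rw [hB0] at this
  have : Ps (g₁ t) - Pφ (g₂ t) = 0 := this
  linarith [this]
lemma aux_genInv {φ : ℝ → ℝ} (hφ : C1FF φ) (hnφ : (0:ℝ) < normD1 φ)
    (hintφ : IntervalIntegrable (fun x => |deriv φ x|) volume 0 1)
    {y : ℝ} (hy : y ∈ Icc (0:ℝ) 1) :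
    φ (genInv 0 1 (cdfOf φ) (cdfOf φ y)) = φ y := by
  obtain ⟨⟨hφcont, Sφ, hφdiff, hφdc⟩, -⟩ := hφ
  set Pφ : ℝ → ℝ := fun u => ∫ x in (0:ℝ)..u, |deriv φ x| with hPφdef
  have hPmono : ∀ u ∈ Icc (0:ℝ) 1, ∀ v ∈ Icc (0:ℝ) 1, u ≤ v → Pφ u ≤ Pφ v := by
    intro u hu v hv huv
    have hadd := aux_prim_add hintφ hu hv
    have hnn : (0:ℝ) ≤ ∫ x in u..v, |deriv φ x| :=
      intervalIntegral.integral_nonneg huv (fun x _ => abs_nonneg _)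
    simp only [hPφdef]
    linarith
  have hFmono : ∀ u ∈ Icc (0:ℝ) 1, ∀ v ∈ Icc (0:ℝ) 1, u ≤ v → cdfOf φ u ≤ cdfOf φ v := by
    intro u hu v hv huv
    exact mul_le_mul_of_nonneg_left (hPmono u hu v hv huv) (inv_nonneg.mpr hnφ.le)
  set F := cdfOf φ with hFdef
  set T : Set ℝ := {x ∈ Icc (0:ℝ) 1 | F y < F x} ∪ {1} with hTdef
  have hgi : genInv 0 1 (cdfOf φ) (cdfOf φ y) = sInf T := rfl
  set ys := sInf T with hysdef
  have hT1 : (1:ℝ) ∈ T := Or.inr rfl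
  have hTne : T.Nonempty := ⟨1, hT1⟩
  have hbdd : BddBelow T := by
    refine ⟨0, ?_⟩
    rintro z (⟨hzI, -⟩ | hz1)
    · exact hzI.1
    · rw [mem_singleton_iff] at hz1; rw [hz1]; exact zero_le_one
  have hys1 : ys ≤ 1 := csInf_le hbdd hT1
  have hyys : y ≤ ys := by
    apply le_csInf hTne
    rintro z (⟨hzI, hFz⟩ | hz1)
    · by_contra hzy
      push_neg at hzy
      exact absurd (hFmono z hzI y hy hzy.le) (not_le.mpr hFz)
    · rw [mem_singleton_iff] at hz1; rw [hz1]; exact hy.2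
  have hysI : ys ∈ Icc (0:ℝ) 1 := ⟨hy.1.trans hyys, hys1⟩
  have hflat : ∀ z ∈ Ico y ys, Pφ z = Pφ y := by
    intro z hz
    have hzI : z ∈ Icc (0:ℝ) 1 := ⟨hy.1.trans hz.1, hz.2.le.trans hys1⟩
    have hzT : z ∉ T := notMem_of_lt_csInf hz.2 hbdd
    have hFle : F z ≤ F y := by
      by_contra hgt
      exact hzT (Or.inl ⟨hzI, not_le.mp hgt⟩)
    have hFge : F y ≤ F z := hFmono y hy z hzI hz.1
    have hFeq : F z = F y := le_antisymm hFle hFge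
    have : (normD1 φ)⁻¹ * Pφ z = (normD1 φ)⁻¹ * Pφ y := hFeq
    exact mul_left_cancel₀ (inv_ne_zero hnφ.ne') this
  have hPys : Pφ ys = Pφ y := by
    rcases eq_or_lt_of_le hyys with heq | hlt
    · rw [← heq]
    · have hPc : ContinuousOn Pφ (Icc 0 1) := by
        have := intervalIntegral.continuousOn_primitive_interval'
          (μ := volume) (f := fun x => |deriv φ x|) hintφ (left_mem_uIcc)
        rwa [uIcc_of_le zero_le_one] at this
      have hIoosub : Ioo y ys ⊆ Icc (0:ℝ) 1 :=
        fun z hz => ⟨hy.1.trans hz.1.le, hz.2.le.trans hys1⟩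
      have h1 : Filter.Tendsto Pφ (𝓝[Ioo y ys] ys) (𝓝 (Pφ ys)) :=
        (hPc ys hysI).mono hIoosub
      have h2 : Filter.Tendsto Pφ (𝓝[Ioo y ys] ys) (𝓝 (Pφ y)) := by
        apply Filter.Tendsto.congr' ?_ (tendsto_const_nhds (α := ℝ) (x := Pφ y))
        exact eventually_of_mem self_mem_nhdsWithin
          (fun z hz => (hflat z (Ioo_subset_Ico_self hz)).symm)
      haveI : (𝓝[Ioo y ys] ys).NeBot := by
        rw [nhdsWithin_Ioo_eq_nhdsLT hlt]
        infer_instance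
      exact tendsto_nhds_unique h1 h2
  have hzero : (∫ x in y..ys, |deriv φ x|) = 0 := by
    have hadd := aux_prim_add hintφ hy hysI
    simp only [hPφdef] at hPys
    linarith
  -- φ is constant on [y, ys]
  have hderiv0 : ∀ z ∈ Ioo y ys \ ↑Sφ, deriv φ z = 0 := by
    rintro z ⟨hz, hzS⟩
    have hzI01 : z ∈ Ioo (0:ℝ) 1 :=
      ⟨lt_of_le_of_lt hy.1 hz.1, lt_of_lt_of_le hz.2 hys1⟩
    have hopen : IsOpen (Ioo (0:ℝ) 1 \ ↑Sφ) := isOpen_Ioo.sdiff Sφ.finite_toSet.isClosed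
    have hca : ContinuousAt (deriv φ) z :=
      (hφdc.mono (diff_subset_diff_left Ioo_subset_Icc_self)).continuousAt
        (hopen.mem_nhds ⟨hzI01, hzS⟩)
    by_contra hne
    have hδ : 0 < |deriv φ z| := abs_pos.mpr hne
    have hev : ∀ᶠ w in 𝓝 z, |deriv φ z| / 2 < |deriv φ w| :=
      hca.abs.eventually (lt_mem_nhds (half_lt_self hδ))
    have hev2 : ∀ᶠ w in 𝓝 z, |deriv φ z| / 2 < |deriv φ w| ∧ w ∈ Ioo y ys :=
      hev.and (eventually_of_mem (Ioo_mem_nhds hz.1 hz.2) (fun _ h => h))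
    rw [Metric.eventually_nhds_iff] at hev2
    obtain ⟨ε, hε, hball⟩ := hev2
    set r := min (ε / 2) (min ((z - y) / 2) ((ys - z) / 2)) with hrdef
    have hr : 0 < r := by
      apply lt_min (by linarith)
      apply lt_min <;> [linarith [hz.1]; linarith [hz.2]]
    have hr1 : r ≤ ε / 2 := min_le_left _ _
    have hr2 : r ≤ (z - y) / 2 := (min_le_right _ _).trans (min_le_left _ _)
    have hr3 : r ≤ (ys - z) / 2 := (min_le_right _ _).trans (min_le_right _ _)
    have hmem : ∀ w ∈ Icc (z - r) (z + r), |deriv φ z| / 2 < |deriv φ w| ∧ w ∈ Ioo y ys := by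
      intro w hw
      apply hball
      rw [Real.dist_eq, abs_lt]
      constructor <;> [linarith [hw.1]; linarith [hw.2]]
    have haI : z - r ∈ Icc (0:ℝ) 1 := ⟨by linarith [hy.1, hz.1], by linarith [hz.2, hys1]⟩
    have hbI : z + r ∈ Icc (0:ℝ) 1 := ⟨by linarith [hy.1, hz.1], by linarith [hz.2, hys1]⟩
    have hlow : (z + r - (z - r)) • (|deriv φ z| / 2) ≤ ∫ x in (z-r)..(z+r), |deriv φ x| := by
      rw [← intervalIntegral.integral_const]
      apply intervalIntegral.integral_mono_on (by linarith)
        intervalIntegrable_const (aux_sub_int hintφ haI hbI)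
      exact fun x hx => (hmem x hx).1.le
    have hsplit1 := aux_prim_add hintφ hy haI
    have hsplit2 := aux_prim_add hintφ haI hbI
    have hsplit3 := aux_prim_add hintφ hbI hysI
    have hnn1 : (0:ℝ) ≤ ∫ x in y..(z-r), |deriv φ x| :=
      intervalIntegral.integral_nonneg (by linarith [hz.1]) (fun x _ => abs_nonneg _)
    have hnn3 : (0:ℝ) ≤ ∫ x in (z+r)..ys, |deriv φ x| :=
      intervalIntegral.integral_nonneg (by linarith [hz.2]) (fun x _ => abs_nonneg _)
    have hsum : (∫ x in y..(z-r), |deriv φ x|) + (∫ x in (z-r)..(z+r), |deriv φ x|)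
        + (∫ x in (z+r)..ys, |deriv φ x|) = ∫ x in y..ys, |deriv φ x| := by
      have e1 := intervalIntegral.integral_add_adjacent_intervals
        (aux_sub_int hintφ hy haI) (aux_sub_int hintφ haI hbI)
      have e2 := intervalIntegral.integral_add_adjacent_intervals
        ((aux_sub_int hintφ hy haI).trans (aux_sub_int hintφ haI hbI))
        (aux_sub_int hintφ hbI hysI)
      rw [← e1] at e2
      linarith
    rw [hzero] at hsum
    have : (2 * r) * (|deriv φ z| / 2) ≤ ∫ x in (z-r)..(z+r), |deriv φ x| := by
      have : z + r - (z - r) = 2 * r := by ring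
      rw [this] at hlow
      simpa using hlow
    nlinarith
  have hconstant : ∀ x ∈ Icc y ys, φ x = φ y := by
    apply aux_const_of_finite Sφ.finite_toSet φ y ys
    · exact hφcont.mono (Icc_subset_Icc hy.1 hys1)
    · rintro z ⟨hz, hzS⟩
      have hzIcc : z ∈ Icc (0:ℝ) 1 :=
        ⟨hy.1.trans hz.1.le, hz.2.le.trans hys1⟩
      have hd := (hφdiff z ⟨hzIcc, hzS⟩).hasDerivAt
      rwa [hderiv0 z ⟨hz, hzS⟩] at hd
  rw [hgi]
  exact hconstant ys (right_mem_Icc.2 hyys)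
/-- if `s ∘ g₁ = φ ∘ g₂` on `[0,1]` for some `g₁, g₂ ∈ 𝒢`, then
`d_T(s,φ) = 0`. -/
theorem dT_zero_of_match (s φ g₁ g₂ : ℝ → ℝ)
    (hs : C1FF s) (hφ : C1FF φ) (hns : 0 < normD1 s) (hnφ : 0 < normD1 φ)
    (hg₁ : InG g₁) (hg₂ : InG g₂)
    (hmatch : ∀ t ∈ Set.Icc (0:ℝ) 1, s (g₁ t) = φ (g₂ t)) :
    dT s φ = 0 := by
  have hints : IntervalIntegrable (fun x => |deriv s x|) volume 0 1 := by
    by_contra h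
    rw [normD1, intervalIntegral.integral_undef h] at hns
    exact lt_irrefl 0 hns
  have hintφ : IntervalIntegrable (fun x => |deriv φ x|) volume 0 1 := by
    by_contra h
    rw [normD1, intervalIntegral.integral_undef h] at hnφ
    exact lt_irrefl 0 hnφ
  obtain ⟨hg₁c, hg₁m, hg₁0, hg₁1⟩ := hg₁
  obtain ⟨hg₂c, hg₂m, hg₂0, hg₂1⟩ := hg₂
  have hkey := key_match hs hφ hints hintφ ⟨hg₁c, hg₁m, hg₁0, hg₁1⟩
    ⟨hg₂c, hg₂m, hg₂0, hg₂1⟩ hmatch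
  have hnorm : normD1 s = normD1 φ := by
    have h1 := hkey 1 (right_mem_Icc.2 zero_le_one)
    rw [hg₁1, hg₂1] at h1
    exact h1
  have hpt : ∀ x ∈ Icc (0:ℝ) 1, s x = φ (transportMap s φ x) := by
    intro x hx
    have hsurj : x ∈ g₁ '' Icc 0 1 := by
      have hiv := intermediate_value_Icc (zero_le_one (α := ℝ)) hg₁c.1.1
      rw [hg₁0, hg₁1] at hiv
      exact hiv hx
    obtain ⟨t, ht, hgt⟩ := hsurj
    have hcdf : cdfOf s x = cdfOf φ (g₂ t) := by
      unfold cdfOf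
      rw [← hgt, hkey t ht, hnorm]
    have hy2 : g₂ t ∈ Icc (0:ℝ) 1 := aux_maps hg₂m hg₂0 hg₂1 t ht
    calc s x = s (g₁ t) := by rw [hgt]
      _ = φ (g₂ t) := hmatch t ht
      _ = φ (genInv 0 1 (cdfOf φ) (cdfOf φ (g₂ t))) := (aux_genInv hφ hnφ hintφ hy2).symm
      _ = φ (transportMap s φ x) := by rw [transportMap, hcdf]
  rw [dT]
  have hzero : (∫ x in (0:ℝ)..1,
      |s x - φ (transportMap s φ x)| ^ 2 * Real.sqrt (deriv (transportMap s φ) x)) = 0 := by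
    have heq : EqOn (fun x => |s x - φ (transportMap s φ x)| ^ 2 *
        Real.sqrt (deriv (transportMap s φ) x)) (fun _ => (0:ℝ)) (uIcc 0 1) := by
      intro x hx
      rw [uIcc_of_le zero_le_one] at hx
      show |s x - φ (transportMap s φ x)| ^ 2 * Real.sqrt (deriv (transportMap s φ) x) = 0
      rw [← hpt x hx]
      simp
    rw [intervalIntegral.integral_congr heq, intervalIntegral.integral_zero]
  rw [hzero, Real.sqrt_zero]
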